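/- Let U be an open set in ℝⁿ, Φ an interval function on U (a real-valued function on closed axis-parallel boxes contained in U that is additive over finite partitions of a box into boxes with pairwise disjoint interiors), and f a continuous real-valued function on U. Then the following two statements are equivalent: (i) for every x ∈ U, Φ(Q)/m(Q) → f(x) as boxes Q ⊂ U containing x have diameter tending to 0; (ii) Φ(Q) = ∫_Q f(x) dx for every box Q ⊂ U. -/

import Mathlib

open MeasureTheory

/-- A (nondegenerate) closed axis-parallel box in `ℝⁿ`. -/
def IsBox {n : ℕ} (Q : Set (Fin n → ℝ)) : Prop :=
  ∃ a b : Fin n → ℝ, (∀ i, a i < b i) ∧ Q = Set.Icc a b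

/-- A finite partition of a box into boxes with pairwise disjoint interiors. -/
def IsBoxPartition {n : ℕ} (Q : Set (Fin n → ℝ)) {m : ℕ}
    (P : Fin m → Set (Fin n → ℝ)) : Prop :=
  (∀ i, IsBox (P i)) ∧ (⋃ i, P i) = Q ∧
    Pairwise fun i j => Disjoint (interior (P i)) (interior (P j))

/-- An interval function on an open set `U`: a real-valued function on closed axis-parallel
boxes contained in `U` that is additive over finite partitions of a box into boxes with
pairwise disjoint interiors. -/
def IsIntervalFunction {n : ℕ} (U : Set (Fin n → ℝ)) (Φ : Set (Fin n → ℝ) → ℝ) : Prop :=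
  ∀ Q : Set (Fin n → ℝ), IsBox Q → Q ⊆ U →
    ∀ (m : ℕ) (P : Fin m → Set (Fin n → ℝ)), IsBoxPartition Q P →
      Φ Q = ∑ i, Φ (P i)

/-- The upper density of an interval function at a point:
`limsup_{x ∈ Q, δ(Q) → 0} Φ(Q)/m(Q) = inf_{ε>0} sup {Φ(Q)/m(Q) : x ∈ Q ⊆ U, δ(Q) ≤ ε}`,
with values in `[-∞, +∞]`. -/
noncomputable def upperDensity {n : ℕ} (U : Set (Fin n → ℝ)) (Φ : Set (Fin n → ℝ) → ℝ)
    (x : Fin n → ℝ) : EReal :=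
  ⨅ (ε : ℝ) (_ : 0 < ε),
    ⨆ (Q : Set (Fin n → ℝ)) (_ : IsBox Q ∧ x ∈ Q ∧ Q ⊆ U ∧ Metric.diam Q ≤ ε),
      ((Φ Q / (volume Q).toReal : ℝ) : EReal)

/-- The lower density of an interval function at a point:
`liminf_{x ∈ Q, δ(Q) → 0} Φ(Q)/m(Q) = sup_{ε>0} inf {Φ(Q)/m(Q) : x ∈ Q ⊆ U, δ(Q) ≤ ε}`,
with values in `[-∞, +∞]`. -/
noncomputable def lowerDensity {n : ℕ} (U : Set (Fin n → ℝ)) (Φ : Set (Fin n → ℝ) → ℝ)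
    (x : Fin n → ℝ) : EReal :=
  ⨆ (ε : ℝ) (_ : 0 < ε),
    ⨅ (Q : Set (Fin n → ℝ)) (_ : IsBox Q ∧ x ∈ Q ∧ Q ⊆ U ∧ Metric.diam Q ≤ ε),
      ((Φ Q / (volume Q).toReal : ℝ) : EReal)

/-- `Φ` has finite density `L` at `x` (relative to `U`): `Φ(Q)/m(Q) → L` as boxes
`Q ⊆ U` containing `x` have diameter tending to `0`. -/
def HasBoxDensityAt {n : ℕ} (U : Set (Fin n → ℝ)) (Φ : Set (Fin n → ℝ) → ℝ)
    (L : ℝ) (x : Fin n → ℝ) : Prop :=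
  ∀ ε > 0, ∃ τ > 0, ∀ Q : Set (Fin n → ℝ), IsBox Q → x ∈ Q → Q ⊆ U →
    Metric.diam Q ≤ τ → |Φ Q / (volume Q).toReal - L| ≤ ε

lemma box_interior_ae_eq {n : ℕ} (a b : Fin n → ℝ) :
    interior (Set.Icc a b) =ᵐ[volume] (Set.Icc a b : Set (Fin n → ℝ)) := by
  rw [show interior (Set.Icc a b) = Set.pi Set.univ fun i => Set.Ioo (a i) (b i) by
    rw [← Set.pi_univ_Icc, interior_pi_set Set.finite_univ]; simp [interior_Icc],
    MeasureTheory.volume_pi]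
  exact MeasureTheory.Measure.univ_pi_Ioo_ae_eq_Icc

lemma integral_boxPartition {n : ℕ} {Q : Set (Fin n → ℝ)} {m : ℕ}
    {P : Fin m → Set (Fin n → ℝ)} (hP : IsBoxPartition Q P)
    {f : (Fin n → ℝ) → ℝ} (hf : IntegrableOn f Q volume) :
    ∫ x in Q, f x = ∑ i, ∫ x in P i, f x := by
  obtain ⟨hPbox, hPunion, hPdisj⟩ := hP
  have hsub : ∀ i, P i ⊆ Q := fun i => hPunion ▸ Set.subset_iUnion P i
  have hint : ∀ i, IntegrableOn f (P i) volume := fun i => hf.mono_set (hsub i)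
  have hae : ∀ i, interior (P i) =ᵐ[volume] P i := by
    intro i; obtain ⟨a, b, -, hi⟩ := hPbox i; rw [hi]; exact box_interior_ae_eq a b
  have key : ∫ x in ⋃ i, interior (P i), f x = ∑ i, ∫ x in P i, f x := by
    rw [MeasureTheory.integral_iUnion_fintype (fun i => isOpen_interior.measurableSet)
      hPdisj (fun i => (hint i).mono_set interior_subset)]
    exact Finset.sum_congr rfl fun i _ => MeasureTheory.setIntegral_congr_set (hae i)
  rw [← key]
  refine (MeasureTheory.setIntegral_congr_set ?_).symm
  rw [MeasureTheory.ae_eq_set]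
  constructor
  · have : (⋃ i, interior (P i)) \ Q = ∅ := by
      rw [Set.diff_eq_empty]
      exact Set.iUnion_subset fun i => interior_subset.trans (hsub i)
    rw [this]; simp
  · refine measure_mono_null (fun x hx => ?_)
      (measure_iUnion_null (fun i => (MeasureTheory.ae_eq_set.1 (hae i)).2) :
        volume (⋃ i, P i \ interior (P i)) = 0)
    obtain ⟨hx1, hx2⟩ := hx
    rw [← hPunion] at hx1
    obtain ⟨i, hi⟩ := Set.mem_iUnion.1 hx1
    simp only [Set.mem_iUnion] at hx2 ⊢
    exact ⟨i, hi, fun h => hx2 ⟨i, h⟩⟩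

lemma box_volume_pos {n : ℕ} {a b : Fin n → ℝ} (h : ∀ i, a i < b i) :
    0 < (volume (Set.Icc a b)).toReal := by
  rw [Real.volume_Icc_pi_toReal (fun i => (h i).le)]
  exact Finset.prod_pos fun i _ => sub_pos.2 (h i)

lemma box_volume_lt_top {n : ℕ} (a b : Fin n → ℝ) :
    volume (Set.Icc a b) < ⊤ := by
  rw [Real.volume_Icc_pi]
  exact ENNReal.prod_lt_top fun i _ => ENNReal.ofReal_lt_top

lemma integral_box_est {n : ℕ} {U : Set (Fin n → ℝ)}
    {f : (Fin n → ℝ) → ℝ} (hf : ContinuousOn f U) {x : Fin n → ℝ} (hx : x ∈ U)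
    {ε : ℝ} (hε : 0 < ε) :
    ∃ τ > 0, ∀ Q : Set (Fin n → ℝ), IsBox Q → x ∈ Q → Q ⊆ U → Metric.diam Q ≤ τ →
      |(∫ y in Q, f y) / (volume Q).toReal - f x| ≤ ε := by
  obtain ⟨δ, hδ, hcont⟩ := Metric.continuousWithinAt_iff.1 (hf x hx) ε hε
  refine ⟨δ / 2, by positivity, fun Q hQ hxQ hQU hd => ?_⟩
  obtain ⟨a, b, hab, rfl⟩ := hQ
  set V := (volume (Set.Icc a b)).toReal with hV
  have hVpos : 0 < V := box_volume_pos hab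
  have hfi : IntegrableOn f (Set.Icc a b) volume :=
    (hf.mono hQU).integrableOn_compact isCompact_Icc
  have hbound : ∀ y ∈ Set.Icc a b, ‖f y - f x‖ ≤ ε := by
    intro y hy
    have hdy : dist y x ≤ δ / 2 :=
      le_trans (Metric.dist_le_diam_of_mem (Metric.isBounded_Icc a b) hy hxQ) hd
    exact le_of_lt (hcont (hQU hy) (lt_of_le_of_lt hdy (by linarith)))
  have hkey : ‖∫ y in Set.Icc a b, (f y - f x)‖ ≤ ε * V := by
    exact MeasureTheory.norm_setIntegral_le_of_norm_le_const (box_volume_lt_top a b) hbound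
  have hsplit : ∫ y in Set.Icc a b, (f y - f x) = (∫ y in Set.Icc a b, f y) - V * f x := by
    rw [MeasureTheory.integral_sub hfi (integrableOn_const (box_volume_lt_top a b).ne),
      MeasureTheory.setIntegral_const, smul_eq_mul, measureReal_def]
  rw [hsplit] at hkey
  have : (∫ y in Set.Icc a b, f y) / V - f x = ((∫ y in Set.Icc a b, f y) - V * f x) / V := by
    field_simp
  rw [this, abs_div, abs_of_pos hVpos, div_le_iff₀ hVpos]
  simpa [Real.norm_eq_abs] using hkey

noncomputable def binEquiv (n : ℕ) : Fin (2 ^ n) ≃ (Fin n → Bool) :=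
  (Fintype.equivFinOfCardEq (by simp)).symm

noncomputable def subLo {n : ℕ} (a b : Fin n → ℝ) (s : Fin n → Bool) : Fin n → ℝ :=
  fun i => if s i then (a i + b i) / 2 else a i

noncomputable def subHi {n : ℕ} (a b : Fin n → ℝ) (s : Fin n → Bool) : Fin n → ℝ :=
  fun i => if s i then b i else (a i + b i) / 2

lemma subLo_lt_subHi {n : ℕ} {a b : Fin n → ℝ} (h : ∀ i, a i < b i) (s : Fin n → Bool) (i : Fin n) :
    subLo a b s i < subHi a b s i := by
  simp only [subLo, subHi]; have := h i; split <;> linarith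

lemma sub_Icc_subset {n : ℕ} {a b : Fin n → ℝ} (h : ∀ i, a i < b i) (s : Fin n → Bool) :
    Set.Icc (subLo a b s) (subHi a b s) ⊆ Set.Icc a b := by
  apply Set.Icc_subset_Icc <;> intro i <;> simp only [subLo, subHi] <;>
    have := h i <;> split <;> linarith

lemma sub_dist {n : ℕ} {a b : Fin n → ℝ} (h : ∀ i, a i < b i) (s : Fin n → Bool) :
    dist (subLo a b s) (subHi a b s) ≤ dist a b / 2 := by
  refine (dist_pi_le_iff (by positivity)).2 fun i => ?_
  have h1 : dist (subLo a b s i) (subHi a b s i) = (b i - a i) / 2 := by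
    rw [Real.dist_eq]; simp only [subLo, subHi]; have := h i
    split <;> rw [abs_of_nonpos (by linarith)] <;> ring
  have h2 : b i - a i ≤ dist a b := by
    calc b i - a i ≤ |a i - b i| := by
          rw [abs_sub_comm]; exact le_abs_self _
      _ = dist (a i) (b i) := (Real.dist_eq _ _).symm
      _ ≤ dist a b := dist_le_pi_dist a b i
  rw [h1]; linarith

lemma sub_volume {n : ℕ} {a b : Fin n → ℝ} (h : ∀ i, a i < b i) (s : Fin n → Bool) :
    (volume (Set.Icc (subLo a b s) (subHi a b s))).toReal
      = (volume (Set.Icc a b)).toReal / 2 ^ n := by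
  rw [Real.volume_Icc_pi_toReal (fun i => (subLo_lt_subHi h s i).le),
    Real.volume_Icc_pi_toReal (fun i => (h i).le)]
  have : ∀ i : Fin n, subHi a b s i - subLo a b s i = (b i - a i) / 2 := by
    intro i; simp only [subLo, subHi]; split <;> ring
  simp only [this]
  rw [Finset.prod_div_distrib, Finset.prod_const]
  simp

lemma sub_union {n : ℕ} {a b : Fin n → ℝ} (h : ∀ i, a i < b i) :
    (⋃ s : Fin n → Bool, Set.Icc (subLo a b s) (subHi a b s)) = Set.Icc a b := by
  apply Set.Subset.antisymm
  · exact Set.iUnion_subset fun s => sub_Icc_subset h s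
  · intro x hx
    refine Set.mem_iUnion.2 ⟨fun i => decide ((a i + b i) / 2 < x i), fun i => ?_, fun i => ?_⟩ <;>
        simp only [subLo, subHi] <;> by_cases hc : (a i + b i) / 2 < x i <;>
        simp [hc]
    · exact hc.le
    · exact hx.1 i
    · exact hx.2 i
    · exact not_lt.1 hc

lemma sub_disjoint {n : ℕ} {a b : Fin n → ℝ} (h : ∀ i, a i < b i)
    {s t : Fin n → Bool} (hst : s ≠ t) :
    Disjoint (interior (Set.Icc (subLo a b s) (subHi a b s)))
      (interior (Set.Icc (subLo a b t) (subHi a b t))) := by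
  obtain ⟨i, hi⟩ := Function.ne_iff.1 hst
  rw [show interior (Set.Icc (subLo a b s) (subHi a b s))
      = Set.pi Set.univ fun j => Set.Ioo (subLo a b s j) (subHi a b s j) by
    rw [← Set.pi_univ_Icc, interior_pi_set Set.finite_univ]; simp [interior_Icc],
    show interior (Set.Icc (subLo a b t) (subHi a b t))
      = Set.pi Set.univ fun j => Set.Ioo (subLo a b t j) (subHi a b t j) by
    rw [← Set.pi_univ_Icc, interior_pi_set Set.finite_univ]; simp [interior_Icc]]
  refine Set.disjoint_left.2 fun x hxs hxt => ?_
  have h1 := hxs i (Set.mem_univ i)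
  have h2 := hxt i (Set.mem_univ i)
  simp only [subLo, subHi, Set.mem_Ioo] at h1 h2
  cases hs : s i <;> cases ht : t i <;> rw [hs] at h1 <;> rw [ht] at h2 <;>
    simp_all <;> linarith [h1.1, h1.2, h2.1, h2.2]

lemma bisect_isBoxPartition {n : ℕ} {a b : Fin n → ℝ} (h : ∀ i, a i < b i) :
    IsBoxPartition (Set.Icc a b)
      (fun k : Fin (2 ^ n) =>
        Set.Icc (subLo a b (binEquiv n k)) (subHi a b (binEquiv n k))) := by
  refine ⟨fun k => ⟨_, _, fun i => subLo_lt_subHi h _ i, rfl⟩, ?_, ?_⟩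
  · rw [(binEquiv n).surjective.iUnion_comp
      (fun s => Set.Icc (subLo a b s) (subHi a b s))]
    exact sub_union h
  · intro k l hkl
    exact sub_disjoint h (fun e => hkl ((binEquiv n).injective e))

lemma step_lemma {n : ℕ} {U : Set (Fin n → ℝ)} {G : Set (Fin n → ℝ) → ℝ}
    (hG : IsIntervalFunction U G) {c : ℝ} {a b : Fin n → ℝ}
    (h : ∀ i, a i < b i) (hQU : Set.Icc a b ⊆ U)
    (hge : c * (volume (Set.Icc a b)).toReal ≤ |G (Set.Icc a b)|) :
    ∃ a' b' : Fin n → ℝ, (∀ i, a' i < b' i) ∧ Set.Icc a' b' ⊆ Set.Icc a b ∧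
      dist a' b' ≤ dist a b / 2 ∧
      c * (volume (Set.Icc a' b')).toReal ≤ |G (Set.Icc a' b')| := by
  by_contra hcon
  push_neg at hcon
  have hlt : ∀ s : Fin n → Bool,
      |G (Set.Icc (subLo a b s) (subHi a b s))| <
        c * (volume (Set.Icc (subLo a b s) (subHi a b s))).toReal :=
    fun s => hcon _ _ (subLo_lt_subHi h s) (sub_Icc_subset h s) (sub_dist h s)
  have hadd : G (Set.Icc a b) = ∑ s : Fin n → Bool, G (Set.Icc (subLo a b s) (subHi a b s)) := by
    rw [hG (Set.Icc a b) ⟨a, b, h, rfl⟩ hQU _ _ (bisect_isBoxPartition h)]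
    exact Equiv.sum_comp (binEquiv n) fun s => G (Set.Icc (subLo a b s) (subHi a b s))
  have hsum : |G (Set.Icc a b)| < c * (volume (Set.Icc a b)).toReal := by
    calc |G (Set.Icc a b)|
        ≤ ∑ s : Fin n → Bool, |G (Set.Icc (subLo a b s) (subHi a b s))| := by
          rw [hadd]; exact Finset.abs_sum_le_sum_abs _ _
      _ < ∑ s : Fin n → Bool,
            c * (volume (Set.Icc (subLo a b s) (subHi a b s))).toReal :=
          Finset.sum_lt_sum_of_nonempty Finset.univ_nonempty fun s _ => hlt s
      _ = c * (volume (Set.Icc a b)).toReal := by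
          simp only [sub_volume h]
          rw [Finset.sum_const, Finset.card_univ]
          have : (Fintype.card (Fin n → Bool) : ℝ) = 2 ^ n := by simp
          rw [nsmul_eq_mul, this]
          field_simp
  linarith

lemma diam_box_le {n : ℕ} (a b : Fin n → ℝ) :
    Metric.diam (Set.Icc a b) ≤ dist a b := by
  refine Metric.diam_le_of_forall_dist_le dist_nonneg fun x hx y hy => ?_
  refine (dist_pi_le_iff dist_nonneg).2 fun i => ?_
  have h1 := hx.1 i; have h2 := hx.2 i; have h3 := hy.1 i; have h4 := hy.2 i
  calc dist (x i) (y i) ≤ dist (a i) (b i) := by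
        rw [Real.dist_eq, Real.dist_eq]
        rw [abs_le]
        constructor <;> linarith [neg_abs_le (a i - b i), le_abs_self (a i - b i)]
    _ ≤ dist a b := dist_le_pi_dist a b i

/-- **Corollary.** For an interval function Φ and a continuous function `f` on an open set
`U ⊆ ℝⁿ`, the following are equivalent: (i) `Φ(Q)/m(Q) → f(x)` as boxes `Q ⊆ U`
containing `x` have diameter tending to `0`, for every `x ∈ U`;
(ii) `Φ(Q) = ∫_Q f(x) dx` for every box `Q ⊆ U`. -/
theorem intervalFunction_hasDensity_iff_eq_integral {n : ℕ}
    (U : Set (Fin n → ℝ)) (hU : IsOpen U)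
    (Φ : Set (Fin n → ℝ) → ℝ) (hΦ : IsIntervalFunction U Φ)
    (f : (Fin n → ℝ) → ℝ) (hf : ContinuousOn f U) :
    (∀ x ∈ U, HasBoxDensityAt U Φ (f x) x) ↔
      (∀ Q : Set (Fin n → ℝ), IsBox Q → Q ⊆ U → Φ Q = ∫ x in Q, f x) := by
  constructor
  · intro hdens Q hQ hQU
    set g : Set (Fin n → ℝ) → ℝ := fun R => Φ R - ∫ x in R, f x with hgdef
    have hgadd : IsIntervalFunction U g := by
      intro R hR hRU m P hP
      have hintR : IntegrableOn f R volume := by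
        obtain ⟨a', b', h', hR'⟩ := hR
        rw [hR']
        exact (hf.mono (hR' ▸ hRU)).integrableOn_compact isCompact_Icc
      simp only [hgdef]
      rw [hΦ R hR hRU m P hP, integral_boxPartition hP hintR, Finset.sum_sub_distrib]
    obtain ⟨a, b, hab, rfl⟩ := hQ
    have hV : 0 < (volume (Set.Icc a b)).toReal := box_volume_pos hab
    set c : ℝ := |g (Set.Icc a b)| / (volume (Set.Icc a b)).toReal with hcdef
    have hceq : c * (volume (Set.Icc a b)).toReal = |g (Set.Icc a b)| :=
      div_mul_cancel₀ _ (ne_of_gt hV)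
    -- construct the nested sequence of boxes
    let S := {p : (Fin n → ℝ) × (Fin n → ℝ) //
      (∀ i, p.1 i < p.2 i) ∧ Set.Icc p.1 p.2 ⊆ Set.Icc a b ∧
      c * (volume (Set.Icc p.1 p.2)).toReal ≤ |g (Set.Icc p.1 p.2)|}
    have hstep : ∀ p : S, ∃ q : S,
        Set.Icc q.1.1 q.1.2 ⊆ Set.Icc p.1.1 p.1.2 ∧
        dist q.1.1 q.1.2 ≤ dist p.1.1 p.1.2 / 2 := by
      rintro ⟨⟨a', b'⟩, h1, h2, h3⟩
      obtain ⟨a'', b'', k1, k2, k3, k4⟩ := step_lemma hgadd h1 (h2.trans hQU) h3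
      exact ⟨⟨(a'', b''), k1, k2.trans h2, k4⟩, k2, k3⟩
    choose F hF1 hF2 using hstep
    let s0 : S := ⟨(a, b), hab, Set.Subset.rfl, hceq.le⟩
    let seq : ℕ → S := fun k => F^[k] s0
    have hseq_succ : ∀ k, seq (k + 1) = F (seq k) := fun k =>
      Function.iterate_succ_apply' F k s0
    have hA_sub : ∀ k, Set.Icc (seq (k+1)).1.1 (seq (k+1)).1.2 ⊆
        Set.Icc (seq k).1.1 (seq k).1.2 := by
      intro k; rw [hseq_succ k]; exact hF1 (seq k)
    have hA_subQ : ∀ k, Set.Icc (seq k).1.1 (seq k).1.2 ⊆ Set.Icc a b :=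
      fun k => (seq k).2.2.1
    have hdist : ∀ k, dist (seq k).1.1 (seq k).1.2 ≤ dist a b / 2 ^ k := by
      intro k; induction k with
      | zero => simp [seq, s0]
      | succ k ih =>
        have h2 := hF2 (seq k)
        rw [← hseq_succ k] at h2
        calc dist (seq (k+1)).1.1 (seq (k+1)).1.2
            ≤ dist (seq k).1.1 (seq k).1.2 / 2 := h2
          _ ≤ dist a b / 2 ^ k / 2 := by linarith
          _ = dist a b / 2 ^ (k + 1) := by ring
    obtain ⟨x, hxmem⟩ :=
      IsCompact.nonempty_iInter_of_sequence_nonempty_isCompact_isClosed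
        (fun k => Set.Icc (seq k).1.1 (seq k).1.2) hA_sub
        (fun k => Set.nonempty_Icc.2 fun i => ((seq k).2.1 i).le)
        isCompact_Icc (fun k => isClosed_Icc)
    have hxU : x ∈ U := hQU (hA_subQ 0 (Set.mem_iInter.1 hxmem 0))
    have key : ∀ ε > (0:ℝ), c ≤ 2 * ε := by
      intro ε hε
      obtain ⟨τ₁, hτ₁, hd1⟩ := hdens x hxU ε hε
      obtain ⟨τ₂, hτ₂, hd2⟩ := integral_box_est hf hxU hε
      obtain ⟨k, hk⟩ : ∃ k : ℕ, dist a b / 2 ^ k < min τ₁ τ₂ := by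
        obtain ⟨k, hk⟩ := pow_unbounded_of_one_lt (dist a b / min τ₁ τ₂)
          (one_lt_two (α := ℝ))
        refine ⟨k, ?_⟩
        rw [div_lt_iff₀ (by positivity : (0:ℝ) < min τ₁ τ₂)] at hk
        rw [div_lt_iff₀ (by positivity : (0:ℝ) < (2:ℝ) ^ k)]
        linarith
      have hbox : IsBox (Set.Icc (seq k).1.1 (seq k).1.2) :=
        ⟨_, _, (seq k).2.1, rfl⟩
      have hxA : x ∈ Set.Icc (seq k).1.1 (seq k).1.2 := Set.mem_iInter.1 hxmem k
      have hAU : Set.Icc (seq k).1.1 (seq k).1.2 ⊆ U := (hA_subQ k).trans hQU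
      have hdiam : Metric.diam (Set.Icc (seq k).1.1 (seq k).1.2) ≤ min τ₁ τ₂ :=
        (diam_box_le _ _).trans (le_of_lt (lt_of_le_of_lt (hdist k) hk))
      have e1 := hd1 _ hbox hxA hAU (hdiam.trans (min_le_left _ _))
      have e2 := hd2 _ hbox hxA hAU (hdiam.trans (min_le_right _ _))
      have hVk : 0 < (volume (Set.Icc (seq k).1.1 (seq k).1.2)).toReal :=
        box_volume_pos (seq k).2.1
      have hgk := (seq k).2.2.2
      have hbnd : |g (Set.Icc (seq k).1.1 (seq k).1.2)| /
          (volume (Set.Icc (seq k).1.1 (seq k).1.2)).toReal ≤ 2 * ε := by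
        rw [← abs_of_pos hVk, ← abs_div]
        have hEq : g (Set.Icc (seq k).1.1 (seq k).1.2) /
            (volume (Set.Icc (seq k).1.1 (seq k).1.2)).toReal
            = (Φ (Set.Icc (seq k).1.1 (seq k).1.2) /
                (volume (Set.Icc (seq k).1.1 (seq k).1.2)).toReal - f x)
              - ((∫ y in Set.Icc (seq k).1.1 (seq k).1.2, f y) /
                (volume (Set.Icc (seq k).1.1 (seq k).1.2)).toReal - f x) := by
          simp only [hgdef]; ring
        rw [hEq]
        obtain ⟨l1, r1⟩ := abs_le.1 e1
        obtain ⟨l2, r2⟩ := abs_le.1 e2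
        rw [abs_le]; constructor <;> linarith
      calc c ≤ |g (Set.Icc (seq k).1.1 (seq k).1.2)| /
            (volume (Set.Icc (seq k).1.1 (seq k).1.2)).toReal :=
          (le_div_iff₀ hVk).2 hgk
        _ ≤ 2 * ε := hbnd
    have hc0 : c ≤ 0 := by
      by_contra hc
      push_neg at hc
      have := key (c / 4) (by linarith)
      linarith
    have habs : |g (Set.Icc a b)| ≤ 0 := by
      rw [← hceq]
      exact mul_nonpos_of_nonpos_of_nonneg hc0 (le_of_lt hV)
    have hg0 : g (Set.Icc a b) = 0 :=
      abs_eq_zero.1 (le_antisymm habs (abs_nonneg _))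
    have := sub_eq_zero.1 hg0
    simpa [hgdef, sub_eq_zero] using hg0
  · intro hint x hx ε hε
    obtain ⟨τ, hτ, hest⟩ := integral_box_est hf hx hε
    exact ⟨τ, hτ, fun Q hQ hxQ hQU hd => by
      rw [hint Q hQ hQU]; exact hest Q hQ hxQ hQU hd⟩
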